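/- For every n-vertex graph G (with n ≥ 2) there exists a vertex subset A ⊆ V(G) with |A| ≥ n/(30·log n) such that the induced subgraph H = G[A] satisfies Δ(H) ≤ 5·(log n)·δ(H). -/

import Mathlib

open Finset

set_option linter.unusedSectionVars false
set_option maxHeartbeats 1000000

section NearlyRegularAux

noncomputable def Kc (n : ℕ) : ℝ := 5 * Real.log n
noncomputable def sc (n : ℕ) : ℝ := n / (30 * Real.log n)
noncomputable def Dstc (n : ℕ) : ℕ := ⌈(5:ℝ) * Real.log n⌉₊
noncomputable def qc (n : ℕ) : ℝ := 2 * n / Kc n + sc n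
noncomputable def lossc (n : ℕ) (D : ℕ) : ℝ :=
  qc n * (Real.log ((D:ℝ) - 1) - Real.log ((Dstc n : ℝ) - 1))

variable {V : Type*} [Fintype V] [DecidableEq V] (G : SimpleGraph V) [DecidableRel G.Adj]

private def dg (W : Finset V) (v : V) : ℕ := (W.filter (fun x => G.Adj v x)).card
private def SS (W : Finset V) : ℕ := ∑ v ∈ W, dg G W v

private def GoodSet (A : Finset V) : Prop :=
  (Fintype.card V : ℝ) / (30 * Real.log (Fintype.card V)) ≤ (A.card : ℝ) ∧
  ∀ v ∈ A, ∀ w ∈ A,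
    ((A.filter (fun x => G.Adj v x)).card : ℝ) ≤
      5 * Real.log (Fintype.card V) * ((A.filter (fun x => G.Adj w x)).card : ℝ)

private lemma dg_mono {W' W : Finset V} (h : W' ⊆ W) (v : V) : dg G W' v ≤ dg G W v :=
  Finset.card_le_card (Finset.filter_subset_filter _ h)

private lemma SS_mono {W' W : Finset V} (h : W' ⊆ W) : SS G W' ≤ SS G W := by
  unfold SS
  calc ∑ v ∈ W', dg G W' v ≤ ∑ v ∈ W', dg G W v :=
        Finset.sum_le_sum (fun v _ => dg_mono G h v)
    _ ≤ ∑ v ∈ W, dg G W v := Finset.sum_le_sum_of_subset h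

private lemma dg_erase (W : Finset V) (v : V) :
    dg G (W.erase v) v = dg G W v := by
  unfold dg
  congr 1
  ext x
  simp only [Finset.mem_filter, Finset.mem_erase]
  constructor
  · rintro ⟨⟨_, hxW⟩, hadj⟩; exact ⟨hxW, hadj⟩
  · rintro ⟨hxW, hadj⟩
    exact ⟨⟨fun h => G.irrefl (h ▸ hadj), hxW⟩, hadj⟩

private lemma SS_erase (W : Finset V) {v : V} (hv : v ∈ W) :
    SS G W = SS G (W.erase v) + 2 * dg G W v := by
  have hsplit : ∀ u ∈ W.erase v,
      dg G W u = dg G (W.erase v) u + (if G.Adj u v then 1 else 0) := by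
    intro u hu
    unfold dg
    conv_lhs => rw [← Finset.insert_erase hv]
    rw [Finset.filter_insert]
    by_cases hadj : G.Adj u v
    · rw [if_pos hadj, if_pos hadj,
        Finset.card_insert_of_notMem (fun hmem => (Finset.mem_erase.mp (Finset.filter_subset _ _ hmem)).1 rfl)]
    · rw [if_neg hadj, if_neg hadj, Nat.add_zero]
  have h1 : SS G W = dg G W v + ∑ u ∈ W.erase v, dg G W u :=
    (Finset.add_sum_erase W _ hv).symm
  rw [Finset.sum_congr rfl hsplit, Finset.sum_add_distrib] at h1
  have h2 : (∑ u ∈ W.erase v, if G.Adj u v then 1 else 0)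
      = ((W.erase v).filter (fun u => G.Adj u v)).card := (Finset.card_filter _ _).symm
  have h3 : ((W.erase v).filter (fun u => G.Adj u v)).card = dg G W v := by
    rw [show ((W.erase v).filter (fun u => G.Adj u v)) = ((W.erase v).filter (fun u => G.Adj v u))
      from Finset.filter_congr (fun x _ => by rw [G.adj_comm])]
    exact dg_erase G W v
  rw [h2, h3] at h1
  unfold SS at *
  omega

private lemma core_exists (t : ℕ) (W : Finset V) :
    ∃ C, C ⊆ W ∧ (∀ v ∈ C, t ≤ dg G C v) ∧
      SS G W + 2 * (t - 1) * C.card ≤ 2 * (t - 1) * W.card + SS G C := by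
  induction W using Finset.strongInduction with
  | _ W ih =>
    by_cases h : ∀ v ∈ W, t ≤ dg G W v
    · exact ⟨W, Finset.Subset.refl _, h, by omega⟩
    · push_neg at h
      obtain ⟨v, hv, hdeg⟩ := h
      obtain ⟨C, hCsub, hCdeg, hCineq⟩ := ih (W.erase v) (Finset.erase_ssubset hv)
      refine ⟨C, hCsub.trans (Finset.erase_subset _ _), hCdeg, ?_⟩
      have hS : SS G W = SS G (W.erase v) + 2 * dg G W v := SS_erase G W hv
      have hc : W.card = (W.erase v).card + 1 := by
        rw [Finset.card_erase_of_mem hv]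
        have h1 : 1 ≤ W.card := Finset.card_pos.mpr ⟨v, hv⟩
        omega
      have hd : dg G W v ≤ t - 1 := by omega
      calc SS G W + 2*(t-1)*C.card
          = (SS G (W.erase v) + 2*(t-1)*C.card) + 2 * dg G W v := by rw [hS]; ring
        _ ≤ (2*(t-1)*(W.erase v).card + SS G C) + 2 * dg G W v := Nat.add_le_add_right hCineq _
        _ ≤ (2*(t-1)*(W.erase v).card + SS G C) + 2 * (t-1) := by
            have := Nat.mul_le_mul_left 2 hd
            omega
        _ = 2*(t-1)*W.card + SS G C := by rw [hc]; ring

private lemma indep_exists (D : ℕ) (W : Finset V) (hdeg : ∀ v ∈ W, dg G W v ≤ D) :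
    ∃ I, I ⊆ W ∧ (∀ v ∈ I, ∀ w ∈ I, ¬ G.Adj v w) ∧ W.card ≤ (D+1) * I.card := by
  induction W using Finset.strongInduction with
  | _ W ih =>
    rcases W.eq_empty_or_nonempty with rfl | ⟨v, hv⟩
    · exact ⟨∅, by simp, by simp, by simp⟩
    · set W2 := (W.erase v).filter (fun x => ¬ G.Adj v x) with hW2def
      have hsub : W2 ⊆ W := (Finset.filter_subset _ _).trans (Finset.erase_subset _ _)
      have hvnot : v ∉ W2 := by
        intro hmem
        exact (Finset.mem_erase.mp (Finset.filter_subset _ _ hmem)).1 rfl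
      have hss : W2 ⊂ W := Finset.ssubset_iff_subset_ne.mpr
        ⟨hsub, fun h => hvnot (h ▸ hv)⟩
      have hdeg2 : ∀ u ∈ W2, dg G W2 u ≤ D :=
        fun u hu => le_trans (dg_mono G hsub u) (hdeg u (hsub hu))
      obtain ⟨I2, hI2sub, hI2ind, hI2card⟩ := ih W2 hss hdeg2
      have hvI2 : v ∉ I2 := fun h => hvnot (hI2sub h)
      refine ⟨insert v I2, Finset.insert_subset hv (hI2sub.trans hsub), ?_, ?_⟩
      · intro a ha b hb
        rcases Finset.mem_insert.mp ha with rfl | ha2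
        · rcases Finset.mem_insert.mp hb with rfl | hb2
          · exact G.irrefl
          · exact (Finset.mem_filter.mp (hI2sub hb2)).2
        · rcases Finset.mem_insert.mp hb with rfl | hb2
          · intro hadj
            exact (Finset.mem_filter.mp (hI2sub ha2)).2 (hadj.symm)
          · exact hI2ind a ha2 b hb2
      · have h1 : W.card = (W.erase v).card + 1 := by
          rw [Finset.card_erase_of_mem hv]
          have : 1 ≤ W.card := Finset.card_pos.mpr ⟨v, hv⟩
          omega
        have h2 : ((W.erase v).filter (fun x => G.Adj v x)).card + W2.card = (W.erase v).card := by
          rw [hW2def]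
          exact Finset.card_filter_add_card_filter_not _
        have h3 : ((W.erase v).filter (fun x => G.Adj v x)).card ≤ dg G W v :=
          Finset.card_le_card (Finset.filter_subset_filter _ (Finset.erase_subset _ _))
        have h4 : dg G W v ≤ D := hdeg v hv
        have h5 : (insert v I2).card = I2.card + 1 := Finset.card_insert_of_notMem hvI2
        have h6 : (D+1) * (I2.card + 1) = (D+1) * I2.card + (D+1) := by ring
        rw [h5, h6]
        omega

private lemma step_count (W : Finset V) (D : ℕ) :
    (SS G (W.filter (fun v => dg G W v ≤ D)) : ℝ)
      + ((D:ℝ)+1) * ((W.card : ℝ) - (W.filter (fun v => dg G W v ≤ D)).card)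
      ≤ (SS G W : ℝ) := by
  set W' := W.filter (fun v => dg G W v ≤ D) with hW'def
  have hsub : W' ⊆ W := Finset.filter_subset _ _
  have h3 : ∑ v ∈ W \ W', dg G W v + ∑ v ∈ W', dg G W v = SS G W :=
    Finset.sum_sdiff hsub
  have h2 : SS G W' ≤ ∑ v ∈ W', dg G W v :=
    Finset.sum_le_sum (fun v _ => dg_mono G hsub v)
  have hsd : (W \ W').card • (D+1) ≤ ∑ v ∈ W \ W', dg G W v := by
    apply Finset.card_nsmul_le_sum
    intro v hvmem
    have hv := Finset.mem_sdiff.mp hvmem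
    have : ¬ (dg G W v ≤ D) := by
      intro hle
      exact hv.2 (Finset.mem_filter.mpr ⟨hv.1, hle⟩)
    omega
  have hcard : (W \ W').card = W.card - W'.card := Finset.card_sdiff_of_subset hsub
  have hcle : W'.card ≤ W.card := Finset.card_le_card hsub
  have hsd' : (W.card - W'.card) * (D+1) ≤ ∑ v ∈ W \ W', dg G W v := by
    rw [← hcard]; simpa [smul_eq_mul] using hsd
  have hbig : SS G W' + (W.card - W'.card) * (D+1) ≤ SS G W := by omega
  have hcast : ((W.card - W'.card : ℕ) : ℝ) = (W.card : ℝ) - W'.card := by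
    exact Nat.cast_sub hcle
  have := (Nat.cast_le (α := ℝ)).mpr hbig
  push_cast at this
  rw [hcast] at this
  linarith

private lemma good_of_core {W C : Finset V} (Dd : ℕ)
    (hW : ∀ v ∈ W, dg G W v ≤ Dd) (hCsub : C ⊆ W)
    (hCdeg : ∀ v ∈ C, ⌈((Dd:ℝ))/(Kc (Fintype.card V))⌉₊ ≤ dg G C v)
    (hK : 0 < Kc (Fintype.card V))
    (hCbig : sc (Fintype.card V) ≤ (C.card : ℝ)) :
    GoodSet G C := by
  set n := Fintype.card V
  constructor
  · exact hCbig
  · intro v hv w hw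
    have h1 : dg G C v ≤ Dd := le_trans (dg_mono G hCsub v) (hW v (hCsub hv))
    have h2 : (⌈((Dd:ℝ))/(Kc n)⌉₊ : ℝ) ≤ (dg G C w : ℝ) := by
      exact_mod_cast hCdeg w hw
    have h3 : ((Dd:ℝ))/(Kc n) ≤ (⌈((Dd:ℝ))/(Kc n)⌉₊ : ℝ) := Nat.le_ceil _
    have h4 : (Dd : ℝ) ≤ Kc n * (dg G C w : ℝ) := by
      rw [div_le_iff₀ hK] at h3
      calc (Dd:ℝ) ≤ (⌈((Dd:ℝ))/(Kc n)⌉₊ : ℝ) * Kc n := h3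
        _ ≤ (dg G C w : ℝ) * Kc n := by
            apply mul_le_mul_of_nonneg_right h2 hK.le
        _ = Kc n * (dg G C w : ℝ) := by ring
    have h5 : ((C.filter (fun x => G.Adj v x)).card : ℝ) ≤ (Dd : ℝ) := by
      exact_mod_cast h1
    calc ((C.filter (fun x => G.Adj v x)).card : ℝ) ≤ (Dd:ℝ) := h5
      _ ≤ Kc n * (dg G C w : ℝ) := h4
      _ = 5 * Real.log n * ((C.filter (fun x => G.Adj w x)).card : ℝ) := by rfl

private lemma cap_of_small_core {W C : Finset V} (Dd : ℕ) (hDd : 1 ≤ Dd)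
    (hW : ∀ v ∈ W, dg G W v ≤ Dd) (hCsub : C ⊆ W)
    (hCineq : SS G W + 2 * (⌈((Dd:ℝ))/(Kc (Fintype.card V))⌉₊ - 1) * C.card
      ≤ 2 * (⌈((Dd:ℝ))/(Kc (Fintype.card V))⌉₊ - 1) * W.card + SS G C)
    (hK : 0 < Kc (Fintype.card V))
    (hCsmall : (C.card : ℝ) < sc (Fintype.card V)) :
    (SS G W : ℝ) ≤ qc (Fintype.card V) * (Dd : ℝ) := by
  set n := Fintype.card V with hndef
  set t := ⌈((Dd:ℝ))/(Kc n)⌉₊ with htdef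
  have ht1 : 1 ≤ t := by
    rw [htdef]
    have : (0:ℝ) < (Dd:ℝ)/(Kc n) := by
      apply div_pos _ hK
      exact_mod_cast hDd
    exact Nat.one_le_iff_ne_zero.mpr (by positivity)
  have hQ1 : SS G W ≤ 2*(t-1)*W.card + SS G C := le_trans (Nat.le_add_right _ _) hCineq
  have hQ2 : (SS G W : ℝ) ≤ 2*((t:ℝ)-1)*(W.card:ℝ) + (SS G C : ℝ) := by
    have := (Nat.cast_le (α := ℝ)).mpr hQ1
    push_cast [Nat.cast_sub ht1] at this
    convert this using 2
  have htub : (t:ℝ) - 1 ≤ (Dd:ℝ)/(Kc n) := by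
    have := Nat.ceil_lt_add_one (show (0:ℝ) ≤ (Dd:ℝ)/(Kc n) by positivity)
    rw [← htdef] at this
    linarith
  have hSC : (SS G C : ℝ) ≤ (C.card : ℝ) * (Dd:ℝ) := by
    have : SS G C ≤ C.card * Dd := by
      unfold SS
      calc ∑ v ∈ C, dg G C v ≤ ∑ _v ∈ C, Dd := by
            apply Finset.sum_le_sum
            intro v hvC
            exact le_trans (dg_mono G hCsub v) (hW v (hCsub hvC))
        _ = C.card * Dd := by rw [Finset.sum_const, smul_eq_mul]
    exact_mod_cast this
  have hWn : (W.card : ℝ) ≤ (n:ℝ) := by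
    have : W.card ≤ n := by
      rw [hndef, ← Finset.card_univ]
      exact Finset.card_le_card (Finset.subset_univ W)
    exact_mod_cast this
  have hDd0 : (0:ℝ) ≤ (Dd:ℝ) := by positivity
  have ht0 : (0:ℝ) ≤ (t:ℝ) - 1 := by
    have : (1:ℝ) ≤ (t:ℝ) := by exact_mod_cast ht1
    linarith
  have e1 : 2*((t:ℝ)-1)*(W.card:ℝ) ≤ 2*((Dd:ℝ)/(Kc n))*(n:ℝ) := by
    have hW0 : (0:ℝ) ≤ (W.card:ℝ) := by positivity
    nlinarith [mul_le_mul htub hWn hW0 (by positivity : (0:ℝ) ≤ (Dd:ℝ)/(Kc n))]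
  have e2 : (C.card:ℝ)*((Dd:ℝ)) ≤ sc n * ((Dd:ℝ)) :=
    mul_le_mul_of_nonneg_right hCsmall.le hDd0
  have e3 : qc n * ((Dd:ℝ)) = 2*(((Dd:ℝ))/(Kc n))*(n:ℝ) + sc n*((Dd:ℝ)) := by
    unfold qc
    field_simp
  linarith

private lemma main_claim (hn2 : 2 ≤ Fintype.card V)
    (hL3 : 3 ≤ Real.log (Fintype.card V)) :
    ∀ D : ℕ, Dstc (Fintype.card V) ≤ D → ∀ W : Finset V, (∀ v ∈ W, dg G W v ≤ D) →
      (∃ A : Finset V, GoodSet G A) ∨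
      (∃ I : Finset V, (∀ v ∈ I, ∀ w ∈ I, ¬ G.Adj v w) ∧
        (W.card : ℝ) - (SS G W : ℝ)/(D:ℝ) - lossc (Fintype.card V) D
          ≤ ((Dstc (Fintype.card V) : ℝ)+1) * (I.card : ℝ)) := by
  set n := Fintype.card V with hndef
  have hL0 : 0 < Real.log n := by linarith
  have hK : 0 < Kc n := by unfold Kc; linarith
  have hn0 : (0:ℝ) < (n:ℝ) := by
    have : 0 < n := by omega
    exact_mod_cast this
  have hs0 : 0 < sc n := by unfold sc; positivity
  have hq0 : 0 ≤ qc n := by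
    unfold qc
    have : 0 ≤ 2 * (n:ℝ) / Kc n := by positivity
    linarith
  have hDst15 : 15 ≤ Dstc n := by
    unfold Dstc
    have h14 : (14:ℝ) < 5 * Real.log n := by linarith
    have := Nat.lt_ceil.mpr (by exact_mod_cast h14 : ((14:ℕ):ℝ) < 5 * Real.log n)
    omega
  intro D hD
  induction D, hD using Nat.le_induction with
  | base =>
    intro W hW
    right
    obtain ⟨I, _, hInd, hIcard⟩ := indep_exists G (Dstc n) W hW
    refine ⟨I, hInd, ?_⟩
    have h0 : lossc n (Dstc n) = 0 := by unfold lossc; ring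
    have h1 : (W.card : ℝ) ≤ ((Dstc n : ℝ)+1) * (I.card : ℝ) := by
      exact_mod_cast hIcard
    have hS : (0:ℝ) ≤ (SS G W : ℝ)/(Dstc n : ℝ) := by positivity
    rw [h0]
    linarith
  | succ D hDge ih =>
    intro W hW
    have hD2 : 2 ≤ D := by omega
    have hD0R : (0:ℝ) < (D:ℝ) := by
      have : 0 < D := by omega
      exact_mod_cast this
    have hD1R : (0:ℝ) < (D:ℝ) + 1 := by linarith
    obtain ⟨C, hCsub, hCdeg, hCineq⟩ := core_exists G ⌈(((D+1:ℕ):ℝ))/(Kc n)⌉₊ W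
    by_cases hCbig : sc n ≤ (C.card : ℝ)
    · exact Or.inl ⟨C, good_of_core G (D+1) hW hCsub hCdeg hK hCbig⟩
    · push_neg at hCbig
      have hcap : (SS G W : ℝ) ≤ qc n * ((D:ℝ)+1) := by
        have := cap_of_small_core G (D+1) (by omega) hW hCsub hCineq hK hCbig
        push_cast at this
        linarith
      set W' := W.filter (fun v => dg G W v ≤ D) with hW'def
      have hW'sub : W' ⊆ W := Finset.filter_subset _ _
      have hW'deg : ∀ v ∈ W', dg G W' v ≤ D := fun v hv =>
        le_trans (dg_mono G hW'sub v) ((Finset.mem_filter.mp hv).2)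
      rcases ih W' hW'deg with hgood | ⟨I, hInd, hIcard⟩
      · exact Or.inl hgood
      · refine Or.inr ⟨I, hInd, ?_⟩
        have hS'le : (SS G W' : ℝ) ≤ (SS G W : ℝ) := by
          exact_mod_cast SS_mono G hW'sub
        have hS'cap : (SS G W' : ℝ) ≤ qc n * ((D:ℝ)+1) := le_trans hS'le hcap
        have hS'0 : (0:ℝ) ≤ (SS G W' : ℝ) := by positivity
        -- counting step
        have hA2 : (W.card:ℝ) - (W'.card:ℝ) ≤ (SS G W : ℝ)/((D:ℝ)+1) - (SS G W' : ℝ)/((D:ℝ)+1) := by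
          rw [div_sub_div_same, le_div_iff₀ hD1R]
          have := step_count G W D
          rw [← hW'def] at this
          nlinarith
        -- split of the division
        have hsplit : (SS G W' : ℝ)/(D:ℝ)
            = (SS G W' : ℝ)/((D:ℝ)+1) + (SS G W' : ℝ)/((D:ℝ)*((D:ℝ)+1)) := by
          field_simp
        -- loss increment
        have hb : (SS G W' : ℝ)/((D:ℝ)*((D:ℝ)+1)) ≤ qc n / (D:ℝ) := by
          rw [div_le_div_iff₀ (by positivity) hD0R]
          nlinarith
        have hD1ne : ((D:ℝ) - 1) ≠ 0 := by
          have : (2:ℝ) ≤ (D:ℝ) := by exact_mod_cast hD2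
          linarith
        have hDm1pos : (0:ℝ) < (D:ℝ) - 1 := by
          have : (2:ℝ) ≤ (D:ℝ) := by exact_mod_cast hD2
          linarith
        have hlog : Real.log ((D:ℝ)-1) - Real.log (D:ℝ) ≤ -(1/(D:ℝ)) := by
          have h1 : Real.log (((D:ℝ)-1)/(D:ℝ)) ≤ ((D:ℝ)-1)/(D:ℝ) - 1 :=
            Real.log_le_sub_one_of_pos (by positivity)
          rw [Real.log_div hD1ne (ne_of_gt hD0R)] at h1
          have h2 : ((D:ℝ)-1)/(D:ℝ) - 1 = -(1/(D:ℝ)) := by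
            field_simp
            ring
          linarith [h1, h2.le, h2.ge]
        have hlossstep : lossc n D + qc n / (D:ℝ) ≤ lossc n (D+1) := by
          unfold lossc
          have hc : ((D+1:ℕ):ℝ) - 1 = (D:ℝ) := by push_cast; ring
          rw [hc]
          have : qc n / (D:ℝ) = qc n * (1/(D:ℝ)) := by ring
          rw [this]
          have hmono : qc n * (1/(D:ℝ)) ≤ qc n * (Real.log (D:ℝ) - Real.log ((D:ℝ)-1)) := by
            apply mul_le_mul_of_nonneg_left _ hq0
            linarith
          nlinarith
        have key : (W.card : ℝ) - (SS G W : ℝ)/((D:ℝ)+1) - lossc n (D+1)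
            ≤ (W'.card : ℝ) - (SS G W' : ℝ)/(D:ℝ) - lossc n D := by
          linarith
        have hcast : (((D+1:ℕ)):ℝ) = (D:ℝ) + 1 := by push_cast; ring
        rw [hcast]
        linarith

private lemma good_of_indep {I : Finset V}
    (hInd : ∀ v ∈ I, ∀ w ∈ I, ¬ G.Adj v w)
    (hcard : sc (Fintype.card V) ≤ (I.card : ℝ)) : GoodSet G I := by
  refine ⟨hcard, ?_⟩
  intro v hv w hw
  have h0 : I.filter (fun x => G.Adj v x) = ∅ :=
    Finset.filter_eq_empty_iff.mpr (fun {x} hx hadj => hInd v hv x hx hadj)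
  rw [h0]
  simp only [Finset.card_empty, Nat.cast_zero]
  positivity

private lemma exists_good (hn : 2 ≤ Fintype.card V) : ∃ A : Finset V, GoodSet G A := by
  set n := Fintype.card V with hndef
  have hn0 : (0:ℝ) < (n:ℝ) := by
    have : 0 < n := by omega
    exact_mod_cast this
  have h1n : (1:ℝ) < (n:ℝ) := by
    have : (2:ℕ) ≤ n := hn
    have h2 : (2:ℝ) ≤ (n:ℝ) := by exact_mod_cast this
    linarith
  have hL0 : 0 < Real.log n := Real.log_pos h1n
  by_cases hsmall : (n:ℝ)/(30*Real.log n) ≤ 1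
  · have : Nonempty V := by
      rw [← Fintype.card_pos_iff]
      omega
    obtain ⟨v⟩ := this
    refine ⟨{v}, ?_, ?_⟩
    · simpa using hsmall
    · intro a ha b hb
      have hav : a = v := Finset.mem_singleton.mp ha
      subst hav
      have h0 : ({a} : Finset V).filter (fun x => G.Adj a x) = ∅ :=
        Finset.filter_eq_empty_iff.mpr (fun {x} hx hadj => by
          rw [Finset.mem_singleton] at hx
          exact G.irrefl (hx ▸ hadj))
      rw [h0]
      simp only [Finset.card_empty, Nat.cast_zero]
      positivity
  · push_neg at hsmall
    have h30 : 30 * Real.log n < (n:ℝ) := by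
      rw [one_lt_div (by positivity)] at hsmall
      linarith
    have hlog2 : Real.log 2 ≤ Real.log n := by
      apply Real.log_le_log (by norm_num)
      exact_mod_cast hn
    have hn21 : (21:ℕ) ≤ n := by
      have hl2 : (0.6931471803 : ℝ) < Real.log 2 := Real.log_two_gt_d9
      have : (20.7:ℝ) < (n:ℝ) := by nlinarith
      by_contra hcon
      push_neg at hcon
      have : (n:ℝ) ≤ 20 := by exact_mod_cast Nat.lt_succ_iff.mp (by omega)
      linarith
    have hn21R : (21:ℝ) ≤ (n:ℝ) := by exact_mod_cast hn21
    have hexp3 : Real.exp 3 ≤ 21 := by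
      have e3 : Real.exp 3 = Real.exp 1 * Real.exp 1 * Real.exp 1 := by
        rw [show (3:ℝ) = 1 + 1 + 1 by norm_num, Real.exp_add, Real.exp_add]
      have he1 : Real.exp 1 < 2.7182818286 := Real.exp_one_lt_d9
      have hep : 0 < Real.exp 1 := Real.exp_pos 1
      nlinarith
    have hL3 : 3 ≤ Real.log n := by
      rw [Real.le_log_iff_exp_le hn0]
      linarith
    have hK : 0 < Kc n := by unfold Kc; linarith
    have hs0 : 0 < sc n := by unfold sc; positivity
    have hq0 : 0 ≤ qc n := by
      unfold qc
      have : 0 ≤ 2 * (n:ℝ) / Kc n := by positivity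
      have : 0 ≤ sc n := hs0.le
      unfold sc at this ⊢
      positivity
    have hDst15 : 15 ≤ Dstc n := by
      unfold Dstc
      have h14 : ((14:ℕ):ℝ) < 5 * Real.log n := by push_cast; linarith
      have := Nat.lt_ceil.mpr h14
      omega
    have hDstlt : (Dstc n : ℝ) < 5 * Real.log n + 1 := by
      unfold Dstc
      exact Nat.ceil_lt_add_one (by positivity)
    have hDstn : Dstc n ≤ n - 1 := by
      have h5 : (Dstc n : ℝ) < (n:ℝ) := by nlinarith
      have : Dstc n < n := by exact_mod_cast h5
      omega
    have hcastn1 : ((n - 1 : ℕ) : ℝ) = (n:ℝ) - 1 := by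
      have : 1 ≤ n := by omega
      push_cast [Nat.cast_sub this]
      ring
    have hn1pos : (0:ℝ) < ((n-1:ℕ):ℝ) := by rw [hcastn1]; linarith
    have hWdeg : ∀ v ∈ (Finset.univ : Finset V), dg G Finset.univ v ≤ n - 1 := by
      intro v _
      have hsub : Finset.univ.filter (fun x => G.Adj v x) ⊆ Finset.univ.erase v := by
        intro x hx
        have hadj := (Finset.mem_filter.mp hx).2
        exact Finset.mem_erase.mpr ⟨(G.ne_of_adj hadj).symm, Finset.mem_univ x⟩
      calc dg G Finset.univ v ≤ (Finset.univ.erase v).card := Finset.card_le_card hsub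
        _ = n - 1 := by rw [Finset.card_erase_of_mem (Finset.mem_univ v), Finset.card_univ]
    rcases main_claim G hn hL3 (n-1) hDstn Finset.univ hWdeg with hgood | ⟨I, hInd, hIcard⟩
    · exact hgood
    · -- top-level cap
      obtain ⟨C, hCsub, hCdeg, hCineq⟩ := core_exists G ⌈(((n-1:ℕ):ℝ))/(Kc n)⌉₊ Finset.univ
      by_cases hCbig : sc n ≤ (C.card : ℝ)
      · exact ⟨C, good_of_core G (n-1) hWdeg hCsub hCdeg hK hCbig⟩
      · push_neg at hCbig
        have hScap : (SS G Finset.univ : ℝ) ≤ qc n * ((n-1:ℕ):ℝ) :=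
          cap_of_small_core G (n-1) (by omega) hWdeg hCsub hCineq hK hCbig
        have hSdiv : (SS G Finset.univ : ℝ)/((n-1:ℕ):ℝ) ≤ qc n := by
          rw [div_le_iff₀ hn1pos]
          nlinarith
        have hloss : lossc n (n-1) ≤ qc n * (Real.log n - 1) := by
          unfold lossc
          have hc2 : ((n-1:ℕ):ℝ) - 1 = (n:ℝ) - 2 := by rw [hcastn1]; ring
          rw [hc2]
          have hlogup : Real.log ((n:ℝ) - 2) ≤ Real.log n := by
            apply Real.log_le_log (by linarith)
            linarith
          have hlogdn : 1 ≤ Real.log ((Dstc n : ℝ) - 1) := by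
            rw [Real.le_log_iff_exp_le (by
              have : (15:ℝ) ≤ (Dstc n : ℝ) := by exact_mod_cast hDst15
              linarith)]
            have he1 : Real.exp 1 < 2.7182818286 := Real.exp_one_lt_d9
            have : (15:ℝ) ≤ (Dstc n : ℝ) := by exact_mod_cast hDst15
            linarith
          apply mul_le_mul_of_nonneg_left _ hq0
          linarith
        have hqL : qc n * Real.log n = 13*(n:ℝ)/30 := by
          unfold qc Kc sc
          field_simp
          ring
        have hucard : ((Finset.univ : Finset V).card : ℝ) = (n:ℝ) := by
          rw [Finset.card_univ]
        rw [hucard] at hIcard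
        have h17 : 17*(n:ℝ)/30 ≤ ((Dstc n : ℝ)+1) * (I.card : ℝ) := by
          have : (n:ℝ) - qc n - qc n * (Real.log n - 1) ≤ ((Dstc n : ℝ)+1) * (I.card : ℝ) := by
            linarith
          nlinarith
        have hfin : sc n * ((Dstc n : ℝ)+1) ≤ 17*(n:ℝ)/30 := by
          have h1 : (Dstc n : ℝ) + 1 ≤ 17 * Real.log n := by nlinarith
          have h2 : sc n * (17 * Real.log n) = 17*(n:ℝ)/30 := by
            unfold sc
            field_simp
          nlinarith
        have hIok : sc n ≤ (I.card : ℝ) := by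
          have hpos : (0:ℝ) < (Dstc n : ℝ) + 1 := by positivity
          nlinarith
        exact ⟨I, good_of_indep G hInd hIok⟩


end NearlyRegularAux

/-- Every `n`-vertex graph (`n ≥ 2`) has an induced subgraph on at least `n/(30 log n)`
vertices whose maximum degree is at most `5 log n` times its minimum degree. -/
theorem exists_nearly_regular_induced {V : Type*} [Fintype V] [DecidableEq V]
    (G : SimpleGraph V) [DecidableRel G.Adj] (hn : 2 ≤ Fintype.card V) :
    ∃ A : Finset V,
      (Fintype.card V : ℝ) / (30 * Real.log (Fintype.card V)) ≤ (A.card : ℝ) ∧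
      ∀ v ∈ A, ∀ w ∈ A,
        ((A.filter (fun x => G.Adj v x)).card : ℝ) ≤
          5 * Real.log (Fintype.card V) * ((A.filter (fun x => G.Adj w x)).card : ℝ) := by
  obtain ⟨A, hA⟩ := exists_good G hn
  exact ⟨A, hA.1, hA.2⟩
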